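/- arXiv:1409.5154 — 6 statements merged into one kernel-verified Lean document; each statement's English description precedes it below -/
import Mathlib

section
/- For all finite simple graphs G and H, the Thue chromatic number of the lexicographic product satisfies π(G ∘ H) ≤ π(H) + (|V(G)| − α(G))·|V(H)|, where α(G) is the independence number of G. -/
/-- A list is a repetition if it is of the form `w ++ w` for a nonempty `w`. -/
def IsRepetition {α : Type*} (l : List α) : Prop := ∃ w : List α, w ≠ [] ∧ l = w ++ w

/-- A list is non-repetitive if no block of consecutive elements is a repetition. -/
def NonRepetitive {α : Type*} (l : List α) : Prop :=
  ∀ t : List α, t <:+: l → ¬ IsRepetition t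

/-- A vertex colouring is non-repetitive if the colour sequence of every path
is not a repetition. -/
def NonRepColoring {V β : Type*} (G : SimpleGraph V) (φ : V → β) : Prop :=
  ∀ ⦃u v : V⦄ (p : G.Walk u v), p.IsPath → ¬ IsRepetition (p.support.map φ)

/-- The Thue chromatic number: minimum number of colours of a non-repetitive colouring. -/
noncomputable def thueNumber {V : Type*} [Fintype V] (G : SimpleGraph V) : ℕ :=
  sInf {k | ∃ φ : V → Fin k, NonRepColoring G φ}

/-- The Thue choice number: least `k` such that from any lists of size at least `k`
one can choose a non-repetitive colouring. -/
noncomputable def thueChoiceNumber {V : Type*} [Fintype V] (G : SimpleGraph V) : ℕ :=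
  sInf {k | ∀ L : V → Finset ℕ, (∀ v, k ≤ (L v).card) →
    ∃ φ : V → ℕ, (∀ v, φ v ∈ L v) ∧ NonRepColoring G φ}

/-- The independence number of a graph. -/
noncomputable def indepNum {V : Type*} [Fintype V] (G : SimpleGraph V) : ℕ :=
  sSup {n | ∃ s : Finset V, (∀ a ∈ s, ∀ b ∈ s, ¬ G.Adj a b) ∧ s.card = n}

/-- The lexicographic product of two simple graphs. -/
def lexProd {V W : Type*} (G : SimpleGraph V) (H : SimpleGraph W) : SimpleGraph (V × W) where
  Adj x y := G.Adj x.1 y.1 ∨ (x.1 = y.1 ∧ H.Adj x.2 y.2)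
  symm := by
    constructor
    rintro x y (h | ⟨h1, h2⟩)
    · exact Or.inl h.symm
    · exact Or.inr ⟨h1.symm, h2.symm⟩
  loopless := by
    constructor
    rintro x (h | ⟨h1, h2⟩)
    · exact G.loopless.irrefl _ h
    · exact H.loopless.irrefl _ h2


lemma not_isRepetition_of_nodup {α : Type*} {l : List α} (h : l.Nodup) : ¬ IsRepetition l := by
  rintro ⟨w, hw, rfl⟩
  rw [List.nodup_append] at h
  obtain ⟨x, hx⟩ := List.exists_mem_of_ne_nil w hw
  exact h.2.2 x hx x hx rfl

lemma isRepetition_of_map {α β : Type*} {f : α → β} (hf : Function.Injective f) {l : List α}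
    (h : IsRepetition (l.map f)) : IsRepetition l := by
  obtain ⟨w, hw, hl⟩ := h
  have hlen : l.length = w.length + w.length := by
    have := congrArg List.length hl; simpa using this
  have hwl : 0 < w.length := List.length_pos_iff.2 hw
  refine ⟨l.take w.length, ?_, ?_⟩
  · intro h0
    have : (l.take w.length).length = w.length := by rw [List.length_take]; omega
    rw [h0] at this; simp at this; omega
  · have hsplit : l = l.take w.length ++ l.drop w.length := (List.take_append_drop _ _).symm
    have hmap : (l.take w.length).map f ++ (l.drop w.length).map f = w ++ w := by
      rw [← List.map_append, ← hsplit, hl]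
    have hlt : ((l.take w.length).map f).length = w.length := by
      simp [List.length_take]; omega
    obtain ⟨h1, h2⟩ := List.append_inj hmap hlt
    have heq : l.take w.length = l.drop w.length :=
      (List.map_injective_iff.2 hf) (h1.trans h2.symm)
    conv_lhs => rw [hsplit]
    rw [heq]

lemma nonRepColoring_of_injective {V β : Type*} {G : SimpleGraph V} {φ : V → β}
    (hφ : Function.Injective φ) : NonRepColoring G φ := by
  intro u v p hp
  exact not_isRepetition_of_nodup (hp.support_nodup.map hφ)

lemma walk_descend {V W : Type*} {G : SimpleGraph V} {H : SimpleGraph W} {S : Finset V}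
    (hS : ∀ a ∈ S, ∀ b ∈ S, ¬ G.Adj a b) :
    ∀ {x y : V × W} (p : (lexProd G H).Walk x y), (∀ z ∈ p.support, z.1 ∈ S) →
      ∃ q : H.Walk x.2 y.2,
        q.support = p.support.map Prod.snd ∧ ∀ z ∈ p.support, z.1 = x.1 := by
  intro x y p
  induction p with
  | nil => intro _; exact ⟨.nil, by simp, by simp⟩
  | @cons u v z h p ih =>
    intro hall
    have hu : u.1 ∈ S := hall _ (by simp)
    have hv : v.1 ∈ S := hall _ (by simp)
    have hadj : u.1 = v.1 ∧ H.Adj u.2 v.2 := by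
      rcases h with h | h
      · exact absurd h (hS _ hu _ hv)
      · exact h
    obtain ⟨q, hq, hfst⟩ := ih (fun w hw => hall w (by simp [hw]))
    refine ⟨.cons hadj.2 q, by simp [hq], ?_⟩
    intro w hw
    rw [SimpleGraph.Walk.support_cons] at hw
    rcases List.mem_cons.1 hw with rfl | hw
    · rfl
    · exact (hfst w hw).trans hadj.1.symm

/-- Upper bound for the Thue chromatic number of a lexicographic product. -/
theorem thueNumber_lexProd_le {V W : Type*} [Fintype V] [Fintype W]
    (G : SimpleGraph V) (H : SimpleGraph W) :
    thueNumber (lexProd G H) ≤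
      thueNumber H + (Fintype.card V - indepNum G) * Fintype.card W := by
  classical
  -- a maximum independent set
  have hbdd : BddAbove {n | ∃ s : Finset V, (∀ a ∈ s, ∀ b ∈ s, ¬ G.Adj a b) ∧ s.card = n} :=
    ⟨Fintype.card V, fun n hn => by obtain ⟨s, -, rfl⟩ := hn; exact s.card_le_univ⟩
  have hαmem : indepNum G ∈ {n | ∃ s : Finset V, (∀ a ∈ s, ∀ b ∈ s, ¬ G.Adj a b) ∧ s.card = n} :=
    Nat.sSup_mem ⟨0, ∅, by simp, by simp⟩ hbdd
  obtain ⟨S, hSind, hScard⟩ := hαmem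
  -- an optimal non-repetitive colouring of H
  set a := thueNumber H with ha
  set m := (Fintype.card V - indepNum G) * Fintype.card W with hm
  have hamem : a ∈ {k | ∃ φ : W → Fin k, NonRepColoring H φ} :=
    Nat.sInf_mem ⟨Fintype.card W, Fintype.equivFin W,
      nonRepColoring_of_injective (Fintype.equivFin W).injective⟩
  obtain ⟨φH, hφH⟩ := hamem
  -- enumerate the vertices outside S × W
  have hcard : Fintype.card {x : V × W // x.1 ∉ S} = m := by
    have e1 : {x : V × W // x.1 ∉ S} ≃ {u : V // u ∉ S} × W :=
      { toFun := fun x => (⟨x.1.1, x.2⟩, x.1.2)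
        invFun := fun y => ⟨(y.1.1, y.2), y.1.2⟩
        left_inv := fun x => rfl
        right_inv := fun y => rfl }
    rw [Fintype.card_congr e1, Fintype.card_prod, hm, ← hScard]
    congr 1
    rw [Fintype.card_subtype_compl, Fintype.card_coe]
  let e := Fintype.equivFinOfCardEq hcard
  let ψ : V × W → Fin (a + m) := fun x =>
    if h : x.1 ∈ S then Fin.castAdd m (φH x.2) else Fin.natAdd a (e ⟨x, h⟩)
  have hψ : ∀ x y, x.1 ∉ S → ψ x = ψ y → x = y := by
    intro x y hx hxy
    by_cases hy : y.1 ∈ S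
    · exfalso
      simp only [ψ, dif_neg hx, dif_pos hy] at hxy
      have h2 := congrArg Fin.val hxy
      simp at h2
      have := (φH y.2).isLt
      omega
    · simp only [ψ, dif_neg hx, dif_neg hy] at hxy
      have h1 : (e ⟨x, hx⟩ : Fin m) = e ⟨y, hy⟩ := by
        have h2 := congrArg Fin.val hxy
        simp at h2
        exact Fin.ext h2
      have := e.injective h1
      exact congrArg Subtype.val this
  apply Nat.sInf_le
  refine ⟨ψ, ?_⟩
  intro u v p hp hrep
  obtain ⟨w, hw, hl⟩ := hrep
  have hn : 0 < w.length := List.length_pos_iff.2 hw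
  have hlen : p.support.length = w.length + w.length := by
    have := congrArg List.length hl; simpa using this
  by_cases hall : ∀ z ∈ p.support, z.1 ∈ S
  · -- all vertices in S × W: project to a path in H
    obtain ⟨q, hq, hfst⟩ := walk_descend hSind p hall
    have hqpath : q.IsPath := by
      apply SimpleGraph.Walk.IsPath.mk'
      rw [hq]
      refine List.Nodup.map_on ?_ hp.support_nodup
      intro x hx y hy hxy
      exact Prod.ext ((hfst x hx).trans (hfst y hy).symm) hxy
    apply hφH q hqpath
    apply isRepetition_of_map (f := Fin.castAdd m (n := a))
      (fun x y h => Fin.ext (by simpa using congrArg Fin.val h))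
    have hmap : p.support.map ψ = (q.support.map φH).map (Fin.castAdd m) := by
      rw [hq, List.map_map, List.map_map]
      refine List.map_congr_left ?_
      intro x hx
      simp only [Function.comp_apply, ψ, dif_pos (hall x hx)]
    rw [← hmap]
    exact ⟨w, hw, hl⟩
  · -- some vertex outside S × W: its colour is unique, contradiction with the repetition
    push_neg at hall
    obtain ⟨x, hxmem, hxS⟩ := hall
    obtain ⟨j, hj, hjx⟩ := List.getElem_of_mem hxmem
    have hpl : p.length + 1 = w.length + w.length := by simpa using hlen
    have hget : ∀ i, (hi : i < w.length) →
        ψ (p.support[i]'(by simp; omega)) = ψ (p.support[i + w.length]'(by simp; omega)) := by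
      intro i hi
      have t1 := List.getElem_of_eq hl (show i < (p.support.map ψ).length by simp; omega)
      have t2 := List.getElem_of_eq hl
        (show i + w.length < (p.support.map ψ).length by simp; omega)
      rw [List.getElem_map] at t1
      rw [List.getElem_map] at t2
      have u1 : (w ++ w)[i]'(by simp; omega) = w[i] := List.getElem_append_left hi
      have u2 : (w ++ w)[i + w.length]'(by simp; omega) = w[i] := by
        rw [List.getElem_append_right (by omega)]
        simp
      exact (t1.trans u1).trans ((t2.trans u2)).symm
    have hnd := hp.support_nodup
    by_cases hjn : j < w.length
    · have heq := hget j hjn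
      have hx1 : (p.support[j]'(by omega)).1 ∉ S := by rw [hjx]; exact hxS
      have := hψ _ _ hx1 heq
      have := (List.Nodup.getElem_inj_iff hnd).1 this
      omega
    · have hi : j - w.length < w.length := by omega
      have heq := hget (j - w.length) hi
      have hxeq : p.support[j - w.length + w.length]'(by omega) = p.support[j]'(by omega) := by
        congr 1; omega
      have hx1 : (p.support[j - w.length + w.length]'(by omega)).1 ∉ S := by
        rw [hxeq, hjx]; exact hxS
      have := hψ _ _ hx1 heq.symm
      have := (List.Nodup.getElem_inj_iff hnd).1 this
      omega
end

section
/- For every finite simple graph G on n vertices, the Thue chromatic number satisfies π(G) ≤ n − α(G) + 1, where α(G) is the independence number of G. -/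
theorem double_getElem_aux {α : Type*} (w : List α) (i : ℕ) (hi : i < w.length) :
    (w ++ w)[i]'(by simp; omega) = (w ++ w)[i + w.length]'(by simp; omega) := by
  rw [List.getElem_append_left (by omega), List.getElem_append_right (by omega)]
  simp

/-- `π(G) ≤ n - α(G) + 1` for every graph `G` on `n` vertices. -/
theorem thueNumber_le {V : Type*} [Fintype V] (G : SimpleGraph V) :
    thueNumber G ≤ Fintype.card V - indepNum G + 1 := by
  classical
  have hbdd : BddAbove {k | ∃ s : Finset V, (∀ a ∈ s, ∀ b ∈ s, ¬ G.Adj a b) ∧ s.card = k} := by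
    refine ⟨Fintype.card V, ?_⟩
    rintro k ⟨s, -, rfl⟩
    exact Finset.card_le_univ s
  have hmem : indepNum G ∈ {k | ∃ s : Finset V, (∀ a ∈ s, ∀ b ∈ s, ¬ G.Adj a b) ∧ s.card = k} :=
    Nat.sSup_mem ⟨0, ⟨∅, by simp⟩⟩ hbdd
  obtain ⟨s, hind, hcard⟩ := hmem
  set m' := Fintype.card V - indepNum G with hm'
  have hcardc : Fintype.card {v : V // v ∉ s} = m' := by
    rw [hm', ← hcard]
    have := Fintype.card_subtype_compl (fun v : V => v ∈ s)
    simpa using this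
  obtain ⟨e⟩ : Nonempty ({v : V // v ∉ s} ≃ Fin m') := ⟨Fintype.equivFinOfCardEq hcardc⟩
  set φ : V → Fin (m' + 1) := fun v =>
    if h : v ∈ s then Fin.last m' else (e ⟨v, h⟩).castSucc with hφ
  have hmemS : ∀ a, a ∈ s → φ a = Fin.last m' := fun a h => by simp [hφ, h]
  have hnotS : ∀ a (h : a ∉ s), φ a = (e ⟨a, h⟩).castSucc := fun a h => by simp [hφ, h]
  have hnotlast : ∀ a, a ∉ s → φ a ≠ Fin.last m' := by
    intro a h
    rw [hnotS a h]
    exact (Fin.castSucc_lt_last _).ne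
  have hcol : NonRepColoring G φ := by
    intro u v p hp hrep
    obtain ⟨w, hw, heq⟩ := hrep
    have hnodup : p.support.Nodup := hp.support_nodup
    have hchain : List.Chain' G.Adj p.support := p.isChain_adj_support
    set L := p.support with hL
    set m := w.length with hm
    have hmpos : 0 < m := List.length_pos_iff.mpr hw
    have hlen : L.length = m + m := by
      have : (L.map φ).length = (w ++ w).length := by rw [heq]
      simpa using this
    have hB : ∀ (i : ℕ) (hi : i < m), φ (L[i]'(by omega)) = φ (L[i + m]'(by omega)) := by
      intro i hi
      have h1 : (L.map φ)[i]'(by rw [List.length_map]; omega)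
          = (L.map φ)[i + m]'(by rw [List.length_map]; omega) := by
        simp only [heq]
        exact double_getElem_aux w i hi
      simpa using h1
    have hmemidx : ∀ (i : ℕ) (hi : i < m), L[i]'(by omega) ∈ s := by
      intro i hi
      by_contra hns
      have h0 := hB i hi
      have hns2 : L[i + m]'(by omega) ∉ s := by
        intro hmem
        exact hnotlast _ hns (h0.trans (hmemS _ hmem))
      rw [hnotS _ hns, hnotS _ hns2] at h0
      have hsub : (⟨L[i]'(by omega), hns⟩ : {v : V // v ∉ s}) = ⟨L[i + m]'(by omega), hns2⟩ :=
        e.injective (Fin.castSucc_injective _ h0)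
      have hveq : L[i]'(by omega) = L[i + m]'(by omega) := congrArg Subtype.val hsub
      have : i = i + m := (List.Nodup.getElem_inj_iff hnodup).mp hveq
      omega
    have h0s : L[0]'(by omega) ∈ s := hmemidx 0 hmpos
    have h1s : L[1]'(by omega) ∈ s := by
      rcases Nat.lt_or_ge 1 m with h | h
      · exact hmemidx 1 h
      · have hm1 : m = 1 := by omega
        have hb := hB 0 hmpos
        have hlast : φ (L[0 + m]'(by omega)) = Fin.last m' := by
          rw [← hb]; exact hmemS _ h0s
        by_contra hc
        have : L[1]'(by omega) = L[0 + m]'(by omega) := by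
          congr 1; omega
        rw [this] at hc
        exact hnotlast _ hc hlast
    have hadj : G.Adj (L[0]'(by omega)) (L[1]'(by omega)) := by
      have := List.isChain_iff_getElem.mp hchain 0 (by omega)
      simpa using this
    exact hind _ h0s _ h1s hadj
  calc thueNumber G ≤ m' + 1 := Nat.sInf_le ⟨φ, hcol⟩
    _ = Fintype.card V - indepNum G + 1 := by rw [hm']
end

section
/- For every finite simple graph G on n vertices, the Thue choice number satisfies π_ch(G) ≤ n − α(G) + 1: for every list assignment L giving each vertex a list of at least n − α(G) + 1 colours, there is a non-repetitive colouring of G choosing each vertex's colour from its list. -/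

lemma exists_injOn_choice {V : Type*} (L : V → Finset ℕ) (t : Finset V)
    (h : ∀ v, t.card ≤ (L v).card) :
    ∃ f : V → ℕ, (∀ v ∈ t, f v ∈ L v) ∧ Set.InjOn f ↑t := by
  classical
  induction t using Finset.induction_on with
  | empty => exact ⟨fun _ => 0, by simp, by simp⟩
  | @insert a t ha ih =>
    have hcard : ∀ v, t.card ≤ (L v).card := fun v =>
      le_trans (Finset.card_le_card (Finset.subset_insert a t)) (h v)
    obtain ⟨f, hf1, hf2⟩ := ih hcard
    have hlt : (t.image f).card < (L a).card := by
      calc (t.image f).card ≤ t.card := Finset.card_image_le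
        _ < (insert a t).card := by rw [Finset.card_insert_of_notMem ha]; omega
        _ ≤ (L a).card := h a
    have : ¬ L a ⊆ t.image f := fun hsub => absurd (Finset.card_le_card hsub) (by omega)
    obtain ⟨c, hc1, hc2⟩ := Finset.not_subset.mp this
    refine ⟨Function.update f a c, ?_, ?_⟩
    · intro v hv
      rcases Finset.mem_insert.mp hv with rfl | hv
      · simpa using hc1
      · rw [Function.update_of_ne (ne_of_mem_of_not_mem hv ha)]
        exact hf1 v hv
    · rw [Finset.coe_insert, Set.injOn_insert (by simpa using ha)]
      constructor
      · intro x hx y hy hxy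
        rw [Function.update_of_ne (ne_of_mem_of_not_mem hx (by simpa using ha)),
          Function.update_of_ne (ne_of_mem_of_not_mem hy (by simpa using ha))] at hxy
        exact hf2 hx hy hxy
      · rw [Function.update_self]
        rintro ⟨x, hx, hxc⟩
        rw [Function.update_of_ne (ne_of_mem_of_not_mem hx (by simpa using ha))] at hxc
        exact hc2 (Finset.mem_image.mpr ⟨x, hx, hxc⟩)

lemma exists_max_indep {V : Type*} [Fintype V] (G : SimpleGraph V) :
    ∃ s : Finset V, (∀ a ∈ s, ∀ b ∈ s, ¬ G.Adj a b) ∧ s.card = indepNum G := by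
  classical
  have hne : {n | ∃ s : Finset V, (∀ a ∈ s, ∀ b ∈ s, ¬ G.Adj a b) ∧ s.card = n}.Nonempty :=
    ⟨0, ∅, by simp, by simp⟩
  have hbdd : BddAbove {n | ∃ s : Finset V, (∀ a ∈ s, ∀ b ∈ s, ¬ G.Adj a b) ∧ s.card = n} := by
    refine ⟨Fintype.card V, ?_⟩
    rintro n ⟨s, -, rfl⟩
    exact Finset.card_le_univ s
  obtain ⟨s, hs, hc⟩ := Nat.sSup_mem hne hbdd
  exact ⟨s, hs, hc⟩

lemma nonRep_of_key {V : Type*} (G : SimpleGraph V) (s : Finset V)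
    (hind : ∀ a ∈ s, ∀ b ∈ s, ¬ G.Adj a b) (φ : V → ℕ)
    (K : ∀ u v, u ∉ s → φ u = φ v → u = v) : NonRepColoring G φ := by
  rintro u v p hp ⟨w, hw0, hw⟩
  set l := p.support with hl
  have hnd : l.Nodup := hp.support_nodup
  have hch : List.Chain' G.Adj l := p.isChain_adj_support
  have hm : 0 < w.length := List.length_pos_iff.mpr hw0
  have hlen : l.length = w.length + w.length := by
    have := congrArg List.length hw
    simpa using this
  have geti : ∀ (i : ℕ) (hi : i < l.length),
      φ (l[i]'hi) = (w ++ w)[i]'(by simpa [hlen] using hi) := by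
    intro i hi
    have h1 : (List.map φ l)[i]'(by simpa using hi) = (w ++ w)[i]'(by simpa [hlen] using hi) :=
      List.getElem_of_eq hw _
    rw [← h1]
    exact (List.getElem_map _).symm
  have pair : ∀ (i : ℕ) (hi : i < w.length),
      φ (l[i]'(by omega)) = φ (l[i + w.length]'(by omega)) := by
    intro i hi
    rw [geti i (by omega), geti (i + w.length) (by omega),
      List.getElem_append_left (by simpa using hi),
      List.getElem_append_right (by simp)]
    congr 1
    omega
  have memS : ∀ (j : ℕ) (hj : j < l.length), l[j]'hj ∈ s := by
    intro j hj
    by_contra hns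
    rcases lt_or_ge j w.length with hjm | hjm
    · have heq := K _ _ hns (pair j hjm)
      have : j = j + w.length := hnd.getElem_inj_iff.mp heq
      omega
    · have hi : j - w.length < w.length := by omega
      have hpe : j - w.length + w.length = j := by omega
      have hφ : φ (l[j]'hj) = φ (l[j - w.length]'(by omega)) := by
        have := pair (j - w.length) hi
        simp only [hpe] at this
        exact this.symm
      have heq := K _ _ hns hφ
      have : j = j - w.length := hnd.getElem_inj_iff.mp heq
      omega
  have hadj : G.Adj (l[0]'(by omega)) (l[1]'(by omega)) := by
    have := List.isChain_iff_getElem.mp hch 0 (by omega)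
    simpa using this
  exact hind _ (memS 0 (by omega)) _ (memS 1 (by omega)) hadj

/-- `π_ch(G) ≤ n - α(G) + 1`: from any lists of size at least `n - α(G) + 1`
one can choose a non-repetitive colouring. -/
theorem thueChoiceNumber_le {V : Type*} [Fintype V] (G : SimpleGraph V) :
    (∀ L : V → Finset ℕ, (∀ v, Fintype.card V - indepNum G + 1 ≤ (L v).card) →
      ∃ φ : V → ℕ, (∀ v, φ v ∈ L v) ∧ NonRepColoring G φ) ∧
    thueChoiceNumber G ≤ Fintype.card V - indepNum G + 1 := by
  classical
  have main : ∀ L : V → Finset ℕ, (∀ v, Fintype.card V - indepNum G + 1 ≤ (L v).card) →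
      ∃ φ : V → ℕ, (∀ v, φ v ∈ L v) ∧ NonRepColoring G φ := by
    intro L hL
    obtain ⟨s, hind, hcard⟩ := exists_max_indep G
    have hcompl : sᶜ.card = Fintype.card V - indepNum G := by
      rw [Finset.card_compl, hcard]
    obtain ⟨f, hf1, hf2⟩ := exists_injOn_choice L sᶜ (fun v => by
      rw [hcompl]; exact le_trans (by omega) (hL v))
    have hex : ∀ v ∈ s, ∃ c, c ∈ L v ∧ c ∉ sᶜ.image f := by
      intro v hv
      have hlt : (sᶜ.image f).card < (L v).card := by
        calc (sᶜ.image f).card ≤ sᶜ.card := Finset.card_image_le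
          _ < Fintype.card V - indepNum G + 1 := by rw [hcompl]; omega
          _ ≤ (L v).card := hL v
      have : ¬ L v ⊆ sᶜ.image f := fun hsub => absurd (Finset.card_le_card hsub) (by omega)
      exact Finset.not_subset.mp this
    set φ : V → ℕ := fun v => if h : v ∈ s then (hex v h).choose else f v with hφdef
    have hmem : ∀ v, φ v ∈ L v := by
      intro v
      by_cases h : v ∈ s
      · simp only [hφdef, dif_pos h]
        exact (hex v h).choose_spec.1
      · simp only [hφdef, dif_neg h]
        exact hf1 v (Finset.mem_compl.mpr h)
    have K : ∀ u v, u ∉ s → φ u = φ v → u = v := by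
      intro u v hu heq
      have hφu : φ u = f u := by simp [hφdef, hu]
      by_cases hv : v ∈ s
      · exfalso
        have hφv : φ v ∉ sᶜ.image f := by
          simp only [hφdef, dif_pos hv]
          exact (hex v hv).choose_spec.2
        exact hφv (heq ▸ hφu ▸ Finset.mem_image.mpr
          ⟨u, Finset.mem_compl.mpr hu, rfl⟩)
      · have hφv : φ v = f v := by simp [hφdef, hv]
        exact hf2 (by simpa using hu) (by simpa using hv) (by
          rw [← hφu, ← hφv]; exact heq)
    exact ⟨φ, hmem, nonRep_of_key G s hind φ K⟩
  exact ⟨main, Nat.sInf_le main⟩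
end

section
/- If G is a complete multipartite graph on n vertices, then π(G) = n − α(G) + 1, where α(G) is the size of a largest partite set. -/
/-- For a complete multipartite graph on `n` vertices, `π(G) = n - α(G) + 1`. -/
theorem thueNumber_completeMultipartite {ι : Type*} [Fintype ι] (V : ι → Type*)
    [∀ i, Fintype (V i)] [Nonempty (Σ i, V i)] :
    thueNumber (SimpleGraph.completeMultipartiteGraph V) =
      Fintype.card (Σ i, V i) - indepNum (SimpleGraph.completeMultipartiteGraph V) + 1 := by
  classical
  set G := SimpleGraph.completeMultipartiteGraph V with hG
  have hadj : ∀ a b : Σ i, V i, G.Adj a b ↔ a.1 ≠ b.1 := by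
    intro a b; simp [hG, SimpleGraph.completeMultipartiteGraph]
  set n := Fintype.card (Σ i, V i) with hn
  set A := {m : ℕ | ∃ s : Finset (Σ i, V i), (∀ a ∈ s, ∀ b ∈ s, ¬ G.Adj a b) ∧ s.card = m}
    with hA
  have huniv : (Finset.univ : Finset (Σ i, V i)).card = n := Finset.card_univ
  have hbdd : BddAbove A := ⟨n, by rintro m ⟨s, -, rfl⟩; exact huniv ▸ s.card_le_univ⟩
  have hmem1 : 1 ∈ A := by
    obtain ⟨x⟩ := ‹Nonempty (Σ i, V i)›
    exact ⟨{x}, by simp, by simp⟩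
  set α := indepNum G with hα
  have hαA : α = sSup A := rfl
  have hα1 : 1 ≤ α := hαA ▸ le_csSup hbdd hmem1
  have hαn : α ≤ n := by
    rw [hαA]
    exact csSup_le ⟨1, hmem1⟩ (by rintro m ⟨s, -, rfl⟩; exact huniv ▸ s.card_le_univ)
  have hindep_le : ∀ s : Finset (Σ i, V i), (∀ a ∈ s, ∀ b ∈ s, ¬ G.Adj a b) → s.card ≤ α :=
    fun s hs => hαA ▸ le_csSup hbdd ⟨s, hs, rfl⟩
  obtain ⟨s₀, hs₀, hs₀card⟩ : α ∈ A := hαA ▸ Nat.sSup_mem ⟨1, hmem1⟩ hbdd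
  obtain ⟨x₀, hx₀⟩ : s₀.Nonempty := Finset.card_pos.mp (by omega)
  set i₀ := x₀.1 with hi₀
  set P : Finset (Σ i, V i) := Finset.univ.filter (fun x => x.1 = i₀) with hPdef
  have hmemP : ∀ x : Σ i, V i, x ∈ P ↔ x.1 = i₀ := fun x => by simp [hPdef]
  have hPindep : ∀ a ∈ P, ∀ b ∈ P, ¬ G.Adj a b := by
    intro a ha b hb hab
    rw [hadj] at hab
    rw [hmemP] at ha hb
    exact hab (ha.trans hb.symm)
  have hPcard_le : P.card ≤ α := hindep_le P hPindep
  have hsub : s₀ ⊆ P := by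
    intro a ha
    rw [hmemP]
    have h := hs₀ a ha x₀ hx₀
    rw [hadj] at h
    exact not_not.mp h
  have hPcard : P.card = α := le_antisymm hPcard_le (hs₀card ▸ Finset.card_le_card hsub)
  -- upper bound: the coloring
  have hfiltercard :
      (Finset.univ.filter (fun x : Σ i, V i => ¬ x.1 = i₀)).card = n - α := by
    have h := Finset.card_filter_add_card_filter_not
      (s := (Finset.univ : Finset (Σ i, V i))) (fun x => x.1 = i₀)
    rw [huniv] at h
    have : (Finset.univ.filter (fun x : Σ i, V i => x.1 = i₀)).card = α := hPcard
    omega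
  have hcardc : Fintype.card {x : Σ i, V i // ¬ x.1 = i₀} = n - α := by
    rw [Fintype.card_subtype]; exact hfiltercard
  let e : {x : Σ i, V i // ¬ x.1 = i₀} ≃ Fin (n - α) :=
    (Fintype.equivFin _).trans (finCongr hcardc)
  let φ : (Σ i, V i) → Fin (n - α + 1) := fun x =>
    if h : x.1 = i₀ then 0 else (e ⟨x, h⟩).succ
  have hφkey : ∀ x y, φ x = φ y → x ≠ y → x.1 = i₀ ∧ y.1 = i₀ := by
    intro x y hxy hne
    by_cases hx : x.1 = i₀ <;> by_cases hy : y.1 = i₀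
    · exact ⟨hx, hy⟩
    · exfalso
      simp only [φ, dif_pos hx, dif_neg hy] at hxy
      exact (Fin.succ_ne_zero _) hxy.symm
    · exfalso
      simp only [φ, dif_pos hy, dif_neg hx] at hxy
      exact (Fin.succ_ne_zero _) hxy
    · exfalso
      simp only [φ, dif_neg hx, dif_neg hy] at hxy
      have := e.injective (Fin.succ_injective _ hxy)
      exact hne (congrArg Subtype.val this)
  have hub : ∃ ψ : (Σ i, V i) → Fin (n - α + 1), NonRepColoring G ψ := by
    refine ⟨φ, ?_⟩
    intro u v p hp hr
    obtain ⟨w, hw, heq⟩ := hr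
    have hnd : p.support.Nodup := (SimpleGraph.Walk.isPath_def p).mp hp
    set L := p.support with hL
    have hlen : L.length = w.length + w.length := by
      have h : (L.map φ).length = (w ++ w).length := by rw [heq]
      simpa using h
    have hwpos : 0 < w.length := List.length_pos_iff.mpr hw
    have hnodup_ne : ∀ a b (ha : a < L.length) (hb : b < L.length), a ≠ b →
        L[a]'ha ≠ L[b]'hb := by
      intro a b ha hb hab hEq
      apply hab
      have h := (hnd.get_inj_iff (i := ⟨a, ha⟩) (j := ⟨b, hb⟩)).mp
        (by simpa [List.get_eq_getElem] using hEq)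
      simpa using h
    have hcol : ∀ a b (ha : a < L.length) (hb : b < L.length), b = a + w.length →
        φ (L[a]'ha) = φ (L[b]'hb) := by
      intro a b ha hb hab
      have haw : a < w.length := by omega
      have h1 : (L.map φ)[a]'(by simpa using ha) = (L.map φ)[b]'(by simpa using hb) := by
        simp only [heq]
        rw [List.getElem_append_left haw, List.getElem_append_right (by omega)]
        congr 1
        omega
      simpa [List.getElem_map] using h1
    have hfst : ∀ j (hj : j < L.length), (L[j]'hj).1 = i₀ := by
      intro j hj
      rcases lt_or_ge j w.length with h | h
      · have hb : j + w.length < L.length := by omega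
        exact (hφkey _ _ (hcol j (j + w.length) hj hb rfl)
          (hnodup_ne j (j + w.length) hj hb (by omega))).1
      · have ha : j - w.length < L.length := by omega
        exact (hφkey _ _ (hcol (j - w.length) j ha hj (by omega))
          (hnodup_ne (j - w.length) j ha hj (by omega))).2
    have h0 : 0 < L.length := by omega
    have h1 : 1 < L.length := by omega
    have hadj01 : G.Adj (L[0]'h0) (L[1]'h1) := by
      have hc := p.isChain_adj_support
      rw [← hL] at hc
      rw [List.isChain_iff_getElem] at hc
      have := hc 0 (by omega)
      simpa [List.get_eq_getElem] using this
    rw [hadj] at hadj01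
    exact hadj01 ((hfst 0 h0).trans (hfst 1 h1).symm)
  -- lower bound
  have hlb : ∀ k, (∃ ψ : (Σ i, V i) → Fin k, NonRepColoring G ψ) → n - α + 1 ≤ k := by
    rintro k ⟨ψ, hψ⟩
    have LB1 : ∀ u v : Σ i, V i, ψ u = ψ v → u ≠ v → u.1 = v.1 := by
      intro u v hc hne
      by_contra h
      have hadjuv : G.Adj u v := (hadj u v).mpr h
      have hpath : (SimpleGraph.Walk.cons hadjuv SimpleGraph.Walk.nil).IsPath := by
        rw [SimpleGraph.Walk.isPath_def]
        simp [hne]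
      exact hψ _ hpath ⟨[ψ u], by simp, by simp [hc]⟩
    have LB2 : ∀ u1 u2 v1 v2 : Σ i, V i, u1 ≠ u2 → ψ u1 = ψ u2 → v1 ≠ v2 → ψ v1 = ψ v2 →
        u1.1 = v1.1 := by
      intro u1 u2 v1 v2 hu hcu hv hcv
      by_cases hcc : ψ u1 = ψ v1
      · by_cases h : u1 = v1
        · rw [h]
        · exact LB1 _ _ hcc h
      · by_contra hne
        have h12 : u1.1 = u2.1 := LB1 _ _ hcu hu
        have h34 : v1.1 = v2.1 := LB1 _ _ hcv hv
        have a1 : G.Adj u1 v1 := (hadj _ _).mpr hne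
        have a2 : G.Adj v1 u2 := (hadj _ _).mpr (by rw [← h12]; exact fun h => hne h.symm)
        have a3 : G.Adj u2 v2 := (hadj _ _).mpr (by rw [← h12, ← h34]; exact hne)
        set p := SimpleGraph.Walk.cons a1 (SimpleGraph.Walk.cons a2
          (SimpleGraph.Walk.cons a3 SimpleGraph.Walk.nil)) with hp
        have hne13 : u1 ≠ v2 := fun h => hne (by rw [h, ← h34])
        have hne23 : v1 ≠ u2 := fun h => hne (h12.trans (congrArg Sigma.fst h).symm)
        have hne24 : u2 ≠ v2 := fun h => hne (by rw [h12, h, ← h34])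
        have hne12 : u1 ≠ v1 := fun h => hne (by rw [h])
        have hpath : p.IsPath := by
          rw [SimpleGraph.Walk.isPath_def]
          simp [hp, hne12, hu, hne13, hne23, hv, hne24]
        exact hψ p hpath ⟨[ψ u1, ψ v1], by simp, by simp [hp, ← hcu, ← hcv]⟩
    by_cases hinj : Function.Injective ψ
    · have hk : n ≤ k := by
        have h := Fintype.card_le_of_injective ψ hinj
        rw [Fintype.card_fin] at h
        exact le_of_eq_of_le hn h
      omega
    · obtain ⟨u1, u2, hcu, hu⟩ : ∃ u1 u2, ψ u1 = ψ u2 ∧ u1 ≠ u2 :=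
        Function.not_injective_iff.mp hinj
      set j₀ := u1.1 with hj₀
      set Q : Finset (Σ i, V i) := Finset.univ.filter (fun x => ¬ x.1 = j₀) with hQ
      set T : Finset (Σ i, V i) := Q ∪ {u1} with hT
      have hinjOn : Set.InjOn ψ ↑T := by
        intro x hx y hy hxy
        by_contra hne
        have hx1 : x.1 = j₀ := LB2 x y u1 u2 hne hxy hu hcu
        have hy1 : y.1 = j₀ := LB2 y x u1 u2 (Ne.symm hne) hxy.symm hu hcu
        have hx' : x = u1 := by
          rcases Finset.mem_union.mp (Finset.mem_coe.mp hx) with h | h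
          · exact absurd hx1 (by simpa [hQ] using (Finset.mem_filter.mp h).2)
          · exact Finset.mem_singleton.mp h
        have hy' : y = u1 := by
          rcases Finset.mem_union.mp (Finset.mem_coe.mp hy) with h | h
          · exact absurd hy1 (by simpa [hQ] using (Finset.mem_filter.mp h).2)
          · exact Finset.mem_singleton.mp h
        exact hne (hx'.trans hy'.symm)
      have hu1Q : u1 ∉ Q := by simp [hQ, hj₀]
      have hTcard : T.card = Q.card + 1 := by
        rw [hT, Finset.card_union_of_disjoint (Finset.disjoint_singleton_right.mpr hu1Q)]
        simp
      have hQcard : Q.card = n - (Finset.univ.filter (fun x : Σ i, V i => x.1 = j₀)).card := by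
        have h : Q = Finset.univ \ (Finset.univ.filter (fun x : Σ i, V i => x.1 = j₀)) := by
          rw [hQ]; ext x; simp
        rw [h, Finset.card_sdiff_of_subset (Finset.filter_subset _ _), huniv]
      have hR : (Finset.univ.filter (fun x : Σ i, V i => x.1 = j₀)).card ≤ α := by
        apply hindep_le
        intro a ha b hb hab
        rw [hadj] at hab
        simp only [Finset.mem_filter] at ha hb
        exact hab (ha.2.trans hb.2.symm)
      have hRn : (Finset.univ.filter (fun x : Σ i, V i => x.1 = j₀)).card ≤ n :=
        huniv ▸ Finset.card_le_univ _
      have hkT : T.card ≤ k := by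
        have h := Finset.card_le_card_of_injOn ψ
          (fun a _ => Finset.mem_univ (ψ a)) hinjOn
        rwa [Finset.card_univ, Fintype.card_fin] at h
      have hfinal : n - α + 1 ≤ T.card := by
        rw [hTcard, hQcard]
        exact Nat.add_le_add_right (Nat.sub_le_sub_left hR n) 1
      exact hfinal.trans hkT
  have hthue : thueNumber G = sInf {k | ∃ ψ : (Σ i, V i) → Fin k, NonRepColoring G ψ} := rfl
  rw [hthue]
  exact le_antisymm (Nat.sInf_le hub) (le_csInf ⟨_, hub⟩ hlb)
end

section
/- For the complete bipartite graph K_{m,n} with m,n ≥ 1, π(K_{m,n}) = min{m,n} + 1. -/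
open Sum

section Aux

variable {m n : ℕ} {β : Type*}

/-- Sides alternate along a chain in the complete bipartite graph. -/
lemma side_parity (l : List (Fin m ⊕ Fin n))
    (hch : l.Chain' (completeBipartiteGraph (Fin m) (Fin n)).Adj) :
    ∀ d i (h : i + d < l.length),
      (l[i + d]'h).isLeft = ((d % 2 == 1) ^^ (l[i]'(by omega)).isLeft) := by
  have step : ∀ i (h : i + 1 < l.length),
      (l[i + 1]'h).isLeft = !(l[i]'(by omega)).isLeft := by
    intro i h
    have := List.isChain_iff_getElem.mp hch i (by omega)
    rcases hx : l.get ⟨i, by omega⟩ with x | x <;>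
      rcases hy : l.get ⟨i + 1, by omega⟩ with y | y <;>
      simp_all [List.get_eq_getElem, completeBipartiteGraph]
  intro d
  induction d with
  | zero => intro i h; simp
  | succ d ih =>
    intro i h
    have h1 : i + (d + 1) = (i + d) + 1 := by omega
    have h2 : (l[(i+d)+1]'(by omega)).isLeft = !(l[i+d]'(by omega)).isLeft :=
      step (i + d) (by omega)
    have h3 := ih i (by omega)
    have : (l[i + (d+1)]'h) = (l[(i+d)+1]'(by omega)) := by
      congr 1
    rw [this, h2, h3]
    rcases Nat.even_or_odd d with hd | hd
    · have e1 : d % 2 = 0 := Nat.even_iff.mp hd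
      have e2 : (d + 1) % 2 = 1 := by omega
      simp [e1, e2]
    · have e1 : d % 2 = 1 := Nat.odd_iff.mp hd
      have e2 : (d + 1) % 2 = 0 := by omega
      simp [e1, e2]

/-- Core combinatorial lemma: colour sequences of chains of distinct vertices are
not repetitions, for a colouring that separates the sides and is injective on one side. -/
lemma nonrep_list (φ : Fin m ⊕ Fin n → β)
    (hcross : ∀ x y, φ (inl x) ≠ φ (inr y))
    (hinj : (∀ x y : Fin m, φ (inl x) = φ (inl y) → x = y) ∨
            (∀ x y : Fin n, φ (inr x) = φ (inr y) → x = y))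
    (l : List (Fin m ⊕ Fin n)) (hnd : l.Nodup)
    (hch : l.Chain' (completeBipartiteGraph (Fin m) (Fin n)).Adj) :
    ¬ IsRepetition (l.map φ) := by
  rintro ⟨w, hw, hmap⟩
  set k := w.length with hk
  have hk0 : 0 < k := List.length_pos_iff.mpr hw
  have hlen : l.length = k + k := by
    have := congrArg List.length hmap
    simpa using this
  -- φ at position i equals φ at position i + k
  have hrep : ∀ i (h : i < k), φ (l[i]'(by omega)) = φ (l[i + k]'(by omega)) := by
    intro i h
    have e1 : (l.map φ)[i]'(by simp; omega) = w[i]'h := by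
      rw [List.getElem_of_eq hmap]; exact List.getElem_append_left (by omega)
    have e2 : (l.map φ)[i + k]'(by simp; omega) = w[i]'h := by
      rw [List.getElem_of_eq hmap, List.getElem_append_right (by omega)]
      congr 1; omega
    have e3 : (l.map φ)[i]'(by simp; omega) = φ (l[i]'(by omega)) := List.getElem_map φ
    have e4 : (l.map φ)[i + k]'(by simp; omega) = φ (l[i + k]'(by omega)) := List.getElem_map φ
    rw [← e3, ← e4, e1, e2]
  rcases Nat.even_or_odd k with hke | hko
  · -- k even, k ≥ 2
    have hk2 : 2 ≤ k := by
      rcases hke with ⟨t, ht⟩; omega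
    have hkm : k % 2 = 0 := Nat.even_iff.mp hke
    -- positions 0 and 1 have opposite sides; pick the relevant one
    have hside01 : (l[1]'(by omega)).isLeft = !(l[0]'(by omega)).isLeft := by
      have := side_parity l hch 1 0 (by omega)
      simpa using this
    have key : ∀ i (h : i < k), l[i]'(by omega) ≠ l[i + k]'(by omega) := by
      intro i h heq
      have := (List.Nodup.getElem_inj_iff hnd).mp heq
      omega
    -- same side at i and i+k
    have same : ∀ i (h : i < k), (l[i + k]'(by omega)).isLeft = (l[i]'(by omega)).isLeft := by
      intro i h
      have := side_parity l hch k i (by omega)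
      simpa [hkm] using this
    rcases hinj with hinjL | hinjR
    · -- find i ∈ {0,1} with l[i] on the left
      have : ∃ i, ∃ (h : i < k), (l[i]'(by omega)).isLeft = true := by
        rcases h0 : (l[0]'(by omega)).isLeft with _ | _
        · exact ⟨1, by omega, by rw [hside01, h0]; rfl⟩
        · exact ⟨0, by omega, h0⟩
      obtain ⟨i, h, hleft⟩ := this
      obtain ⟨x, hx⟩ := Sum.isLeft_iff.mp hleft
      have hleft2 : (l[i + k]'(by omega)).isLeft = true := by rw [same i h, hleft]
      obtain ⟨y, hy⟩ := Sum.isLeft_iff.mp hleft2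
      have := hrep i h
      rw [hx, hy] at this
      have := hinjL _ _ this
      exact key i h (by rw [hx, hy, this])
    · have : ∃ i, ∃ (h : i < k), (l[i]'(by omega)).isLeft = false := by
        rcases h0 : (l[0]'(by omega)).isLeft with _ | _
        · exact ⟨0, by omega, h0⟩
        · exact ⟨1, by omega, by rw [hside01, h0]; rfl⟩
      obtain ⟨i, h, hright⟩ := this
      obtain ⟨x, hx⟩ := Sum.isRight_iff.mp (by rw [← Sum.not_isLeft, hright]; simp)
      have hright2 : (l[i + k]'(by omega)).isLeft = false := by rw [same i h, hright]
      obtain ⟨y, hy⟩ := Sum.isRight_iff.mp (by rw [← Sum.not_isLeft, hright2]; simp)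
      have := hrep i h
      rw [hx, hy] at this
      have := hinjR _ _ this
      exact key i h (by rw [hx, hy, this])
  · -- k odd: positions 0 and k have opposite sides but equal colours
    have hkm : k % 2 = 1 := Nat.odd_iff.mp hko
    have opp : (l[0 + k]'(by omega)).isLeft = !(l[0]'(by omega)).isLeft := by
      have := side_parity l hch k 0 (by omega)
      simpa [hkm] using this
    have hc := hrep 0 hk0
    rcases h0 : (l[0]'(by omega)) with x | x
    · have : (l[0 + k]'(by omega)).isLeft = false := by rw [opp, h0]; rfl
      obtain ⟨y, hy⟩ := Sum.isRight_iff.mp (by rw [← Sum.not_isLeft, this]; simp)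
      rw [h0, hy] at hc
      exact hcross x y hc
    · have : (l[0 + k]'(by omega)).isLeft = true := by rw [opp, h0]; rfl
      obtain ⟨y, hy⟩ := Sum.isLeft_iff.mp this
      rw [h0, hy] at hc
      exact hcross y x hc.symm

end Aux

section Main

variable {m n : ℕ} {β : Type*}

lemma nonrep_coloring (φ : Fin m ⊕ Fin n → β)
    (hcross : ∀ x y, φ (inl x) ≠ φ (inr y))
    (hinj : (∀ x y : Fin m, φ (inl x) = φ (inl y) → x = y) ∨
            (∀ x y : Fin n, φ (inr x) = φ (inr y) → x = y)) :
    NonRepColoring (completeBipartiteGraph (Fin m) (Fin n)) φ := by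
  intro u v p hp hr
  exact nonrep_list φ hcross hinj p.support hp.support_nodup p.isChain_adj_support hr

end Main

section Lower

open SimpleGraph

lemma adj_lr {m n : ℕ} (x : Fin m) (y : Fin n) :
    (completeBipartiteGraph (Fin m) (Fin n)).Adj (inl x) (inr y) := by simp

lemma adj_rl {m n : ℕ} (y : Fin n) (x : Fin m) :
    (completeBipartiteGraph (Fin m) (Fin n)).Adj (inr y) (inl x) := by simp

lemma lower_bound {m n k : ℕ} (hm : 1 ≤ m) (hn : 1 ≤ n) (hk : k ≤ min m n)
    (φ : Fin m ⊕ Fin n → Fin k) :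
    ¬ NonRepColoring (completeBipartiteGraph (Fin m) (Fin n)) φ := by
  intro hnr
  by_cases hc : ∃ x y, φ (inl x) = φ (inr y)
  · obtain ⟨x, y, hxy⟩ := hc
    exact hnr (Walk.cons (adj_lr x y) Walk.nil) (by simp [Walk.isPath_def])
      ⟨[φ (inl x)], by simp, by simp [hxy]⟩
  · push_neg at hc
    set A : Finset (Fin k) := Finset.univ.image (fun x : Fin m => φ (inl x)) with hA
    set B : Finset (Fin k) := Finset.univ.image (fun y : Fin n => φ (inr y)) with hB
    have hdisj : Disjoint A B := by
      rw [Finset.disjoint_left]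
      rintro c hcA hcB
      simp only [hA, hB, Finset.mem_image, Finset.mem_univ, true_and] at hcA hcB
      obtain ⟨x, hx⟩ := hcA
      obtain ⟨y, hy⟩ := hcB
      exact hc x y (hx.trans hy.symm)
    have hAB : A.card + B.card ≤ k := by
      have := Finset.card_le_univ (A ∪ B)
      rw [Finset.card_union_of_disjoint hdisj] at this
      simpa using this
    have hAne : 1 ≤ A.card := by
      have : A.Nonempty := ⟨φ (inl ⟨0, hm⟩), by simp [hA]⟩
      exact this.card_pos
    have hBne : 1 ≤ B.card := by
      have : B.Nonempty := ⟨φ (inr ⟨0, hn⟩), by simp [hB]⟩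
      exact this.card_pos
    have hAm : A.card < m := by omega
    have hBn : B.card < n := by omega
    obtain ⟨x, -, x', -, hxx, hfx⟩ :=
      Finset.exists_ne_map_eq_of_card_lt_of_maps_to (by simpa using hAm)
        (fun a (_ : a ∈ (Finset.univ : Finset (Fin m))) => by
          simp [hA] : ∀ a ∈ (Finset.univ : Finset (Fin m)),
            (fun x : Fin m => φ (inl x)) a ∈ A)
    obtain ⟨y, -, y', -, hyy, hfy⟩ :=
      Finset.exists_ne_map_eq_of_card_lt_of_maps_to (by simpa using hBn)
        (fun a (_ : a ∈ (Finset.univ : Finset (Fin n))) => by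
          simp [hB] : ∀ a ∈ (Finset.univ : Finset (Fin n)),
            (fun y : Fin n => φ (inr y)) a ∈ B)
    refine hnr
      (Walk.cons (adj_lr x y) (Walk.cons (adj_rl y x') (Walk.cons (adj_lr x' y') Walk.nil)))
      (by simp [Walk.isPath_def, hxx, hyy]) ⟨[φ (inl x), φ (inr y)], by simp, ?_⟩
    simp only [Walk.support_cons, Walk.support_nil, List.map_cons, List.map_nil]
    rw [show φ (inl x') = φ (inl x) from hfx.symm, show φ (inr y') = φ (inr y) from hfy.symm]
    rfl

end Lower

/-- `π(K_{m,n}) = min{m,n} + 1`. -/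
theorem thueNumber_completeBipartite (m n : ℕ) (hm : 1 ≤ m) (hn : 1 ≤ n) :
    thueNumber (completeBipartiteGraph (Fin m) (Fin n)) = min m n + 1 := by
  have hmem : (min m n + 1) ∈
      {k | ∃ φ : Fin m ⊕ Fin n → Fin k,
        NonRepColoring (completeBipartiteGraph (Fin m) (Fin n)) φ} := by
    rcases le_total m n with h | h
    · rw [Set.mem_setOf_eq, min_eq_left h]
      refine ⟨Sum.elim (fun x => x.succ) (fun _ => 0), nonrep_coloring _ ?_ (Or.inl ?_)⟩
      · intro x y; simpa using Fin.succ_ne_zero x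
      · intro x y hxy
        simpa using Fin.succ_injective m (by simpa using hxy)
    · rw [Set.mem_setOf_eq, min_eq_right h]
      refine ⟨Sum.elim (fun _ => 0) (fun y => y.succ), nonrep_coloring _ ?_ (Or.inr ?_)⟩
      · intro x y; simpa using (Fin.succ_ne_zero y).symm
      · intro x y hxy
        simpa using Fin.succ_injective n (by simpa using hxy)
  refine le_antisymm (Nat.sInf_le hmem) (le_csInf ⟨_, hmem⟩ ?_)
  intro k hk
  by_contra hlt
  push_neg at hlt
  obtain ⟨φ, hφ⟩ := hk
  exact lower_bound hm hn (by omega) φ hφ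
end

section
/- Let G and H be finite simple graphs and suppose G ∘ H is coloured non-repetitively with fewer than π(G)·|V(H)| colours. If g ∈ V(G) is a vertex whose H-layer g[H] is not rainbow coloured (two vertices of g[H] share a colour), then for every vertex g' adjacent to g in G, the layer g'[H] is rainbow coloured (all its vertices receive pairwise distinct colours). -/
/-- If `G ∘ H` is non-repetitively coloured with fewer than `π(G)·|V(H)|` colours
and the layer `g[H]` is not rainbow, then the layer of every neighbour of `g`
is rainbow coloured. -/
theorem neighbour_layer_rainbow {V W : Type*} [Fintype V] [Fintype W]
    (G : SimpleGraph V) (H : SimpleGraph W) {β : Type*} [DecidableEq β]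
    (φ : V × W → β) (hφ : NonRepColoring (lexProd G H) φ)
    (hcol : (Finset.univ.image φ).card < thueNumber G * Fintype.card W)
    (g : V) (hg : ∃ h h' : W, h ≠ h' ∧ φ (g, h) = φ (g, h'))
    (g' : V) (hadj : G.Adj g g') :
    Function.Injective (fun h : W => φ (g', h)) := by
  intro w1 w2 heq
  by_contra hne
  obtain ⟨h, h', hhh, hcoleq⟩ := hg
  have hgg' : g ≠ g' := G.ne_of_adj hadj
  -- build the walk (g,h) - (g',w1) - (g,h') - (g',w2)
  have a1 : (lexProd G H).Adj (g, h) (g', w1) := Or.inl hadj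
  have a2 : (lexProd G H).Adj (g', w1) (g, h') := Or.inl hadj.symm
  have a3 : (lexProd G H).Adj (g, h') (g', w2) := Or.inl hadj
  let p : (lexProd G H).Walk (g, h) (g', w2) :=
    SimpleGraph.Walk.cons a1 (SimpleGraph.Walk.cons a2
      (SimpleGraph.Walk.cons a3 SimpleGraph.Walk.nil))
  have hp : p.IsPath := by
    rw [SimpleGraph.Walk.isPath_def]
    simp only [p, SimpleGraph.Walk.support_cons, SimpleGraph.Walk.support_nil]
    simp [List.nodup_cons, Prod.ext_iff, hgg', hgg'.symm, hhh, hne]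
  apply hφ p hp
  refine ⟨[φ (g, h), φ (g', w1)], by simp, ?_⟩
  simp only [p, SimpleGraph.Walk.support_cons, SimpleGraph.Walk.support_nil, List.map_cons]
  simp at heq
  simp [hcoleq, heq]
end
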